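/- The (min,plus)-convolution of a convex piecewise-affine function by a concave piecewise-affine function decomposes into three (possibly trivial) consecutive parts: a convex function, then a concave function, then a convex function. More precisely, if f : [a,b] → ℝ is convex piecewise affine and g : [c,d] → ℝ is concave piecewise affine, there exist β ≤ γ in [a+c, b+d] such that f * g restricted to [a+c, β] is convex, to [β, γ] is concave, and to [γ, b+d] is convex. -/

import Mathlib

/-- `F` is piecewise affine on `[a,b]`: there is a finite subdivision of `[a,b]`
on each piece of which `F` is affine. -/
def IsPiecewiseAffineOn (F : ℝ → ℝ) (a b : ℝ) : Prop :=
  ∃ (N : ℕ) (p : Fin (N + 1) → ℝ), Monotone p ∧ p 0 = a ∧ p (Fin.last N) = b ∧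
    ∀ i : Fin N, ∃ s t : ℝ, ∀ x ∈ Set.Icc (p i.castSucc) (p i.succ), F x = s * x + t

open Set

section Helpers

variable {a b c d : ℝ} {F G : ℝ → ℝ}

/-- increments of a convex function are monotone. -/
lemma convex_incr (hF : ConvexOn ℝ (Set.Icc a b) F) {p q δ : ℝ}
    (hp : p ∈ Set.Icc a b) (hqd : q + δ ∈ Set.Icc a b) (hpq : p ≤ q) (hδ : 0 ≤ δ) :
    F (p + δ) + F q ≤ F p + F (q + δ) := by
  rcases eq_or_lt_of_le (by linarith : (0:ℝ) ≤ q + δ - p) with hT | hT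
  · have h1 : δ = 0 := by linarith
    have h2 : q = p := by linarith
    subst h1; subst h2; simp
  · set T := q + δ - p with hTdef
    have hT0 : T ≠ 0 := by positivity
    have hl : (0:ℝ) ≤ δ / T := by positivity
    have hm : (0:ℝ) ≤ (q - p) / T := by
      apply div_nonneg (by linarith) (by linarith)
    have hsum1 : (q - p)/T + δ/T = 1 := by field_simp [hTdef]; ring
    have hsum2 : δ/T + (q - p)/T = 1 := by field_simp [hTdef]; ring
    have h1 := hF.2 hp hqd hm hl hsum1
    have h2 := hF.2 hp hqd hl hm hsum2
    simp only [smul_eq_mul] at h1 h2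
    have e1 : (q - p)/T * p + δ/T * (q + δ) = p + δ := by field_simp [hTdef]; ring
    have e2 : δ/T * p + (q - p)/T * (q + δ) = q := by field_simp [hTdef]; ring
    rw [e1] at h1; rw [e2] at h2
    have key : (q - p)/T * F p + δ/T * F (q + δ) + (δ/T * F p + (q - p)/T * F (q + δ))
        = F p + F (q + δ) := by linear_combination (F p + F (q + δ)) * hsum1
    linarith

lemma exists_cell_right {N : ℕ} {p : Fin (N+1) → ℝ} (hp : Monotone p) {x : ℝ}
    (h1 : p 0 ≤ x) (h2 : x < p (Fin.last N)) :
    ∃ j : Fin N, p j.castSucc ≤ x ∧ x < p j.succ := by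
  classical
  have h0T : (0 : Fin (N+1)) ∈ Finset.univ.filter (fun j : Fin (N+1) => p j ≤ x) := by
    simp [h1]
  set T := Finset.univ.filter (fun j : Fin (N+1) => p j ≤ x) with hT
  have hTne : T.Nonempty := ⟨0, h0T⟩
  set jm := T.max' hTne with hjm
  have hjmT : jm ∈ T := T.max'_mem hTne
  have hjle : p jm ≤ x := by
    have := hjmT; rw [hT, Finset.mem_filter] at this; exact this.2
  have hlast : jm ≠ Fin.last N := by
    intro h; rw [h] at hjle; exact absurd h2 (not_lt.2 hjle)
  have hjlt : (jm : ℕ) < N := by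
    have := jm.isLt
    have : (jm : ℕ) ≠ N := fun h => hlast (Fin.ext (by simp [Fin.last, h]))
    omega
  refine ⟨⟨jm, hjlt⟩, ?_, ?_⟩
  · have : (⟨(jm : ℕ), hjlt⟩ : Fin N).castSucc = jm := by
      apply Fin.ext; simp
    rw [this]; exact hjle
  · by_contra hx
    push_neg at hx
    have hmem : (⟨(jm : ℕ), hjlt⟩ : Fin N).succ ∈ T := by
      rw [hT, Finset.mem_filter]; exact ⟨Finset.mem_univ _, hx⟩
    have := T.le_max' _ hmem
    rw [← hjm] at this
    have : ((⟨(jm : ℕ), hjlt⟩ : Fin N).succ : ℕ) ≤ (jm : ℕ) := this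
    simp [Fin.succ] at this

lemma exists_cell_left {N : ℕ} {p : Fin (N+1) → ℝ} (hp : Monotone p) {x : ℝ}
    (h1 : p 0 < x) (h2 : x ≤ p (Fin.last N)) :
    ∃ j : Fin N, p j.castSucc < x ∧ x ≤ p j.succ := by
  classical
  have h0T : (Fin.last N) ∈ Finset.univ.filter (fun j : Fin (N+1) => x ≤ p j) := by
    simp [h2]
  set T := Finset.univ.filter (fun j : Fin (N+1) => x ≤ p j) with hT
  have hTne : T.Nonempty := ⟨_, h0T⟩
  set jm := T.min' hTne with hjm
  have hjmT : jm ∈ T := T.min'_mem hTne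
  have hjle : x ≤ p jm := by
    have := hjmT; rw [hT, Finset.mem_filter] at this; exact this.2
  have hzero : jm ≠ 0 := by
    intro h; rw [h] at hjle; exact absurd h1 (not_lt.2 hjle)
  have hjpos : 0 < (jm : ℕ) := by
    rcases Nat.eq_zero_or_pos (jm : ℕ) with h | h
    · exact absurd (Fin.ext (by simp [h])) hzero
    · exact h
  have hjlt : (jm : ℕ) - 1 < N := by have := jm.isLt; omega
  refine ⟨⟨(jm : ℕ) - 1, hjlt⟩, ?_, ?_⟩
  · by_contra hx
    push_neg at hx
    have hmem : (⟨(jm : ℕ) - 1, hjlt⟩ : Fin N).castSucc ∈ T := by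
      rw [hT, Finset.mem_filter]; exact ⟨Finset.mem_univ _, hx⟩
    have := T.min'_le _ hmem
    rw [← hjm] at this
    have : (jm : ℕ) ≤ (jm : ℕ) - 1 := this
    omega
  · have : (⟨(jm : ℕ) - 1, hjlt⟩ : Fin N).succ = jm := by
      apply Fin.ext; simp [Fin.succ]; omega
    rw [this]; exact hjle

lemma exists_cell {N : ℕ} {p : Fin (N+1) → ℝ} (hp : Monotone p)
    (hN : p 0 < p (Fin.last N)) {x : ℝ}
    (h1 : p 0 ≤ x) (h2 : x ≤ p (Fin.last N)) :
    ∃ j : Fin N, p j.castSucc ≤ x ∧ x ≤ p j.succ := by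
  rcases lt_or_eq_of_le h2 with hlt | heq
  · obtain ⟨j, hj1, hj2⟩ := exists_cell_right hp h1 hlt
    exact ⟨j, hj1, le_of_lt hj2⟩
  · subst heq
    obtain ⟨j, hj1, hj2⟩ := exists_cell_left hp hN (le_refl _)
    exact ⟨j, le_of_lt hj1, hj2⟩

lemma pwa_continuousOn (h : IsPiecewiseAffineOn F a b) (hab : a < b) :
    ContinuousOn F (Set.Icc a b) := by
  obtain ⟨N, p, hmono, hp0, hpl, hcell⟩ := h
  intro x hx
  have hR : ContinuousWithinAt F (Set.Icc a b ∩ Set.Ici x) x := by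
    rcases eq_or_lt_of_le hx.2 with heq | hlt
    · refine continuousWithinAt_singleton.mono ?_
      rintro y ⟨hy1, hy2⟩
      exact le_antisymm (heq ▸ hy1.2) hy2
    · obtain ⟨j, hj1, hj2⟩ := exists_cell_right hmono (hp0 ▸ hx.1) (hpl ▸ hlt)
      obtain ⟨s, tt, hst⟩ := hcell j
      have hV : Set.Iio (p j.succ) ∈ nhds x := Iio_mem_nhds hj2
      rw [← continuousWithinAt_inter hV]
      have hsub : (Set.Icc a b ∩ Set.Ici x) ∩ Set.Iio (p j.succ) ⊆
          Set.Icc (p j.castSucc) (p j.succ) := by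
        rintro y ⟨⟨_, hy2⟩, hy3⟩
        exact ⟨le_trans hj1 hy2, le_of_lt hy3⟩
      refine ContinuousWithinAt.congr (f := fun y => s * y + tt) ?_ ?_ ?_
      · exact ((continuous_const.mul continuous_id).add continuous_const).continuousWithinAt
      · intro y hy; exact hst y (hsub hy)
      · exact hst x ⟨hj1, le_of_lt hj2⟩
  have hL : ContinuousWithinAt F (Set.Icc a b ∩ Set.Iic x) x := by
    rcases eq_or_lt_of_le hx.1 with heq | hlt
    · refine continuousWithinAt_singleton.mono ?_
      rintro y ⟨hy1, hy2⟩
      exact le_antisymm hy2 (heq ▸ hy1.1)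
    · obtain ⟨j, hj1, hj2⟩ := exists_cell_left hmono (hp0 ▸ hlt) (hpl ▸ hx.2)
      obtain ⟨s, tt, hst⟩ := hcell j
      have hV : Set.Ioi (p j.castSucc) ∈ nhds x := Ioi_mem_nhds hj1
      rw [← continuousWithinAt_inter hV]
      have hsub : (Set.Icc a b ∩ Set.Iic x) ∩ Set.Ioi (p j.castSucc) ⊆
          Set.Icc (p j.castSucc) (p j.succ) := by
        rintro y ⟨⟨_, hy2⟩, hy3⟩
        exact ⟨le_of_lt hy3, le_trans hy2 hj2⟩
      refine ContinuousWithinAt.congr (f := fun y => s * y + tt) ?_ ?_ ?_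
      · exact ((continuous_const.mul continuous_id).add continuous_const).continuousWithinAt
      · intro y hy; exact hst y (hsub hy)
      · exact hst x ⟨le_of_lt hj1, hj2⟩
  have := hL.union hR
  refine this.mono ?_
  intro y hy
  rcases le_total y x with h | h
  · exact Or.inl ⟨hy, h⟩
  · exact Or.inr ⟨hy, h⟩

end Helpers

section Helpers2

variable {a b c d : ℝ} {F G : ℝ → ℝ}

lemma convexOn_congr {s : Set ℝ} {f g : ℝ → ℝ} (hf : ConvexOn ℝ s f)
    (h : Set.EqOn f g s) : ConvexOn ℝ s g := by
  refine ⟨hf.1, fun x hx y hy lam mu hl hm hlm => ?_⟩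
  rw [← h hx, ← h hy, ← h (hf.1 hx hy hl hm hlm)]
  exact hf.2 hx hy hl hm hlm

lemma concaveOn_congr {s : Set ℝ} {f g : ℝ → ℝ} (hf : ConcaveOn ℝ s f)
    (h : Set.EqOn f g s) : ConcaveOn ℝ s g := by
  refine ⟨hf.1, fun x hx y hy lam mu hl hm hlm => ?_⟩
  rw [← h hx, ← h hy, ← h (hf.1 hx hy hl hm hlm)]
  exact hf.2 hx hy hl hm hlm

lemma convexOn_sub_const (hF : ConvexOn ℝ (Set.Icc a b) F) (q w : ℝ) {s : Set ℝ}
    (hs : Convex ℝ s) (hmem : ∀ x ∈ s, x - q ∈ Set.Icc a b) :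
    ConvexOn ℝ s (fun x => F (x - q) + w) := by
  refine ⟨hs, fun x hx y hy lam mu hl hm hlm => ?_⟩
  simp only [smul_eq_mul]
  have h1 : lam * x + mu * y - q = lam * (x - q) + mu * (y - q) := by
    linear_combination q * hlm
  rw [h1]
  have := hF.2 (hmem x hx) (hmem y hy) hl hm hlm
  simp only [smul_eq_mul] at this
  have h2 : lam * w + mu * w = w := by linear_combination w * hlm
  linarith

lemma concaveOn_G_sub (hG : ConcaveOn ℝ (Set.Icc c d) G) (q r w : ℝ) {s : Set ℝ}
    (hs : Convex ℝ s) (hmem : ∀ x ∈ s, x - q ∈ Set.Icc c d) :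
    ConcaveOn ℝ s (fun x => G (x - q) + (r * x + w)) := by
  refine ⟨hs, fun x hx y hy lam mu hl hm hlm => ?_⟩
  simp only [smul_eq_mul]
  have h1 : lam * x + mu * y - q = lam * (x - q) + mu * (y - q) := by
    linear_combination q * hlm
  rw [h1]
  have := hG.2 (hmem x hx) (hmem y hy) hl hm hlm
  simp only [smul_eq_mul] at this
  have h2 : r * (lam * x + mu * y) + w
      = lam * (r * x + w) + mu * (r * y + w) := by linear_combination (-w) * hlm
  linarith [h2]

lemma concaveOn_G_const_sub (hG : ConcaveOn ℝ (Set.Icc c d) G) (q r w : ℝ) {s : Set ℝ}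
    (hs : Convex ℝ s) (hmem : ∀ x ∈ s, q - x ∈ Set.Icc c d) :
    ConcaveOn ℝ s (fun x => G (q - x) + (r * x + w)) := by
  refine ⟨hs, fun x hx y hy lam mu hl hm hlm => ?_⟩
  simp only [smul_eq_mul]
  have h1 : q - (lam * x + mu * y) = lam * (q - x) + mu * (q - y) := by
    linear_combination (-q) * hlm
  rw [h1]
  have := hG.2 (hmem x hx) (hmem y hy) hl hm hlm
  simp only [smul_eq_mul] at this
  have h2 : r * (lam * x + mu * y) + w
      = lam * (r * x + w) + mu * (r * y + w) := by linear_combination (-w) * hlm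
  linarith [h2]

lemma concave_min {s : Set ℝ} {ψ : ℝ → ℝ} (h : ConcaveOn ℝ s ψ) {e1 e2 t : ℝ}
    (h1 : e1 ∈ s) (h2 : e2 ∈ s) (ht : t ∈ Set.Icc e1 e2) :
    min (ψ e1) (ψ e2) ≤ ψ t := by
  have he : e1 ≤ e2 := le_trans ht.1 ht.2
  have hseg : t ∈ segment ℝ e1 e2 := by rw [segment_eq_Icc he]; exact ht
  obtain ⟨lam, mu, hl, hm, hlm, hcombo⟩ := hseg
  have := h.2 h1 h2 hl hm hlm
  rw [hcombo] at this
  simp only [smul_eq_mul] at this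
  have hmin1 : min (ψ e1) (ψ e2) ≤ ψ e1 := min_le_left _ _
  have hmin2 : min (ψ e1) (ψ e2) ≤ ψ e2 := min_le_right _ _
  have hmm : lam * (min (ψ e1) (ψ e2)) + mu * (min (ψ e1) (ψ e2)) = min (ψ e1) (ψ e2) := by
    linear_combination (min (ψ e1) (ψ e2)) * hlm
  nlinarith [mul_le_mul_of_nonneg_left hmin1 hl, mul_le_mul_of_nonneg_left hmin2 hm]

lemma contOn_finset_inf' {ι : Type*} (s : Finset ι) {f : ι → ℝ → ℝ} {K : Set ℝ}
    (hf : ∀ i ∈ s, ContinuousOn (f i) K) (hs : s.Nonempty) :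
    ContinuousOn (fun x => s.inf' hs fun i => f i x) K := by
  classical
  induction s using Finset.cons_induction with
  | empty => exact absurd hs (by simp)
  | cons i t hit ih =>
    rcases t.eq_empty_or_nonempty with rfl | ht
    · simpa using hf i (by simp)
    · have heq : (fun x => (Finset.cons i t hit).inf' hs fun j => f j x)
          = fun x => (f i x) ⊓ (t.inf' ht fun j => f j x) := by
        funext x
        simp [Finset.inf'_insert (H := ht)]
      rw [heq]
      exact ContinuousOn.inf (hf i (Finset.mem_cons_self _ _))
        (ih (fun j hj => hf j (Finset.mem_cons.2 (Or.inr hj))) ht)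

end Helpers2

theorem minplus_aux (a b c d : ℝ) (hab : a < b) (hcd : c < d)
    (F G : ℝ → ℝ)
    (hFconv : ConvexOn ℝ (Set.Icc a b) F) (hFpwa : IsPiecewiseAffineOn F a b)
    (hGconc : ConcaveOn ℝ (Set.Icc c d) G) (hGpwa : IsPiecewiseAffineOn G c d)
    (H : ℝ → ℝ)
    (hH : ∀ x, H x = sInf {z | ∃ u ∈ Set.Icc a b, ∃ v ∈ Set.Icc c d,
      u + v = x ∧ z = F u + G v}) :
    ∃ β γ : ℝ, a + c ≤ β ∧ β ≤ γ ∧ γ ≤ b + d ∧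
      ConvexOn ℝ (Set.Icc (a + c) β) H ∧ ConcaveOn ℝ (Set.Icc β γ) H ∧
      ConvexOn ℝ (Set.Icc γ (b + d)) H := by
  have hFc : ContinuousOn F (Set.Icc a b) := pwa_continuousOn hFpwa hab
  have hGc : ContinuousOn G (Set.Icc c d) := pwa_continuousOn hGpwa hcd
  obtain ⟨uF, huF, hminF⟩ := isCompact_Icc.exists_isMinOn (Set.nonempty_Icc.2 hab.le) hFc
  obtain ⟨vG, hvG, hminG⟩ := isCompact_Icc.exists_isMinOn (Set.nonempty_Icc.2 hcd.le) hGc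
  have hSbdd : ∀ x : ℝ, BddBelow {z | ∃ u ∈ Set.Icc a b, ∃ v ∈ Set.Icc c d,
      u + v = x ∧ z = F u + G v} := by
    intro x
    refine ⟨F uF + G vG, ?_⟩
    rintro z ⟨u, hu, v, hv, huv, rfl⟩
    exact add_le_add ((isMinOn_iff.1 hminF) u hu) ((isMinOn_iff.1 hminG) v hv)
  have hHle : ∀ x u v : ℝ, a ≤ u → u ≤ b → c ≤ v → v ≤ d → u + v = x →
      H x ≤ F u + G v := by
    intro x u v h1 h2 h3 h4 h5
    rw [hH]
    exact csInf_le (hSbdd x) ⟨u, ⟨h1, h2⟩, v, ⟨h3, h4⟩, h5, rfl⟩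
  have hHge : ∀ x : ℝ, a + c ≤ x → x ≤ b + d → ∀ w : ℝ,
      (∀ u v : ℝ, a ≤ u → u ≤ b → c ≤ v → v ≤ d → u + v = x → w ≤ F u + G v) →
      w ≤ H x := by
    intro x hx1 hx2 w hw
    rw [hH]
    apply le_csInf
    · refine ⟨F (max a (x - d)) + G (x - max a (x - d)), max a (x - d),
        ⟨le_max_left _ _, max_le hab.le (by linarith)⟩, x - max a (x - d), ⟨?_, ?_⟩,
        by ring, rfl⟩
      · rcases max_cases a (x - d) with ⟨h, _⟩ | ⟨h, _⟩ <;> rw [h] <;> linarith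
      · linarith [le_max_right a (x - d)]
    · rintro z ⟨u, hu, v, hv, huv, rfl⟩
      exact hw u v hu.1 hu.2 hv.1 hv.2 huv
  obtain ⟨N, p, hpm, hp0, hpl, hcellF⟩ := hFpwa
  have hplast : p 0 < p (Fin.last N) := by rw [hp0, hpl]; exact hab
  -- attainment of the infimum at a structured point
  have hattain : ∀ t : ℝ, a + c ≤ t → t ≤ b + d → ∃ u0 : ℝ,
      (a ≤ u0 ∧ u0 ≤ b ∧ c ≤ t - u0 ∧ t - u0 ≤ d) ∧ H t = F u0 + G (t - u0) ∧
      ((∃ j : Fin (N + 1), u0 = p j) ∨ t - u0 = c ∨ t - u0 = d) := by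
    intro t ht1 ht2
    have hloa : a ≤ max a (t - d) := le_max_left _ _
    have hlotd : t - d ≤ max a (t - d) := le_max_right _ _
    have hhib : min b (t - c) ≤ b := min_le_left _ _
    have hhitc : min b (t - c) ≤ t - c := min_le_right _ _
    have hlohi : max a (t - d) ≤ min b (t - c) := by
      apply max_le <;> apply le_min <;> linarith
    set lo := max a (t - d) with hlodef
    set hi := min b (t - c) with hhidef
    have hsubF : Set.Icc lo hi ⊆ Set.Icc a b := fun u hu =>
      ⟨le_trans hloa hu.1, le_trans hu.2 hhib⟩
    have hmapsG : ∀ u ∈ Set.Icc lo hi, t - u ∈ Set.Icc c d := by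
      intro u hu
      constructor
      · linarith [hu.2]
      · linarith [hu.1]
    have hφc : ContinuousOn (fun u => F u + G (t - u)) (Set.Icc lo hi) := by
      apply ContinuousOn.add (hFc.mono hsubF)
      exact ContinuousOn.comp hGc ((continuous_const.sub continuous_id).continuousOn) hmapsG
    obtain ⟨us, hus, hminus⟩ := isCompact_Icc.exists_isMinOn (Set.nonempty_Icc.2 hlohi) hφc
    have husab : us ∈ Set.Icc a b := hsubF hus
    obtain ⟨j, hj1, hj2⟩ := exists_cell hpm hplast (hp0 ▸ husab.1) (hpl ▸ husab.2)
    obtain ⟨sj, tj, hsj⟩ := hcellF j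
    set e1 := max (p j.castSucc) lo with he1def
    set e2 := min (p j.succ) hi with he2def
    have he1us : e1 ≤ us := max_le hj1 hus.1
    have huse2 : us ≤ e2 := le_min hj2 hus.2
    have hsubcell : Set.Icc e1 e2 ⊆ Set.Icc (p j.castSucc) (p j.succ) := fun u hu =>
      ⟨le_trans (le_max_left _ _) hu.1, le_trans hu.2 (min_le_left _ _)⟩
    have hsublohi : Set.Icc e1 e2 ⊆ Set.Icc lo hi := fun u hu =>
      ⟨le_trans (le_max_right _ _) hu.1, le_trans hu.2 (min_le_right _ _)⟩
    have hφconc : ConcaveOn ℝ (Set.Icc e1 e2) (fun u => F u + G (t - u)) := by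
      have base := concaveOn_G_const_sub hGconc t sj tj (convex_Icc e1 e2)
        (fun u hu => hmapsG u (hsublohi hu))
      apply concaveOn_congr base
      intro u hu
      simp only
      rw [hsj u (hsubcell hu)]
      ring
    have hmin2 : min (F e1 + G (t - e1)) (F e2 + G (t - e2)) ≤ F us + G (t - us) :=
      concave_min hφconc ⟨le_refl e1, le_trans he1us huse2⟩
        ⟨le_trans he1us huse2, le_refl e2⟩ ⟨he1us, huse2⟩
    have hpick : ∃ e : ℝ, (e = e1 ∨ e = e2) ∧ F e + G (t - e) ≤ F us + G (t - us) := by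
      rcases min_cases (F e1 + G (t - e1)) (F e2 + G (t - e2)) with ⟨hm, _⟩ | ⟨hm, _⟩
      · exact ⟨e1, Or.inl rfl, by rw [← hm]; exact hmin2⟩
      · exact ⟨e2, Or.inr rfl, by rw [← hm]; exact hmin2⟩
    obtain ⟨e, hee, heφ⟩ := hpick
    have heIcc : e ∈ Set.Icc lo hi := by
      rcases hee with rfl | rfl
      · exact hsublohi ⟨le_refl _, le_trans he1us huse2⟩
      · exact hsublohi ⟨le_trans he1us huse2, le_refl _⟩
    have hemin : ∀ u ∈ Set.Icc lo hi, F e + G (t - e) ≤ F u + G (t - u) := fun u hu =>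
      le_trans heφ ((isMinOn_iff.1 hminus) u hu)
    refine ⟨e, ⟨le_trans hloa heIcc.1, le_trans heIcc.2 hhib, ?_, ?_⟩, ?_, ?_⟩
    · linarith [heIcc.2]
    · linarith [heIcc.1]
    · apply le_antisymm
      · apply hHle t e (t - e) (le_trans hloa heIcc.1) (le_trans heIcc.2 hhib)
        · linarith [heIcc.2]
        · linarith [heIcc.1]
        · ring
      · apply hHge t ht1 ht2
        intro u v h1 h2 h3 h4 h5
        have huIcc : u ∈ Set.Icc lo hi := ⟨max_le h1 (by linarith), le_min h2 (by linarith)⟩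
        have := hemin u huIcc
        have hveq : v = t - u := by linarith
        rw [hveq]
        exact this
    · rcases hee with rfl | rfl
      · rcases max_cases (p j.castSucc) lo with ⟨hm, _⟩ | ⟨hm, _⟩
        · exact Or.inl ⟨j.castSucc, by rw [he1def, hm]⟩
        · rcases max_cases a (t - d) with ⟨hm2, _⟩ | ⟨hm2, _⟩
          · refine Or.inl ⟨0, ?_⟩
            rw [he1def, hm, hlodef, hm2, hp0]
          · refine Or.inr (Or.inr ?_)
            rw [he1def, hm, hlodef, hm2]
            ring
      · rcases min_cases (p j.succ) hi with ⟨hm, _⟩ | ⟨hm, _⟩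
        · exact Or.inl ⟨j.succ, by rw [he2def, hm]⟩
        · rcases min_cases b (t - c) with ⟨hm2, _⟩ | ⟨hm2, _⟩
          · refine Or.inl ⟨Fin.last N, ?_⟩
            rw [he2def, hm, hhidef, hm2, hpl]
          · refine Or.inr (Or.inl ?_)
            rw [he2def, hm, hhidef, hm2]
            ring
  -- the functions Ψ i and continuity of H
  have hmedmem : ∀ (i : Fin (N + 1)) (x : ℝ), a + c ≤ x → x ≤ b + d →
      (c ≤ max c (min (x - p i) d) ∧ max c (min (x - p i) d) ≤ d ∧
       a ≤ x - max c (min (x - p i) d) ∧ x - max c (min (x - p i) d) ≤ b) := by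
    intro i x hx1 hx2
    have hpa : a ≤ p i := hp0 ▸ hpm (Fin.zero_le i)
    have hpb : p i ≤ b := hpl ▸ hpm (Fin.le_last i)
    refine ⟨le_max_left _ _, max_le hcd.le (min_le_right _ _), ?_, ?_⟩
    · have h1 : max c (min (x - p i) d) ≤ x - a := by
        apply max_le (by linarith)
        calc min (x - p i) d ≤ x - p i := min_le_left _ _
        _ ≤ x - a := by linarith
      linarith
    · have h1 : x - b ≤ min (x - p i) d := le_min (by linarith) (by linarith)
      have h2 : min (x - p i) d ≤ max c (min (x - p i) d) := le_max_right _ _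
      linarith
  have hHlePsi : ∀ (i : Fin (N + 1)) (x : ℝ), a + c ≤ x → x ≤ b + d →
      H x ≤ F (x - max c (min (x - p i) d)) + G (max c (min (x - p i) d)) := by
    intro i x hx1 hx2
    obtain ⟨h1, h2, h3, h4⟩ := hmedmem i x hx1 hx2
    exact hHle x _ _ h3 h4 h1 h2 (by ring)
  have hexPsi : ∀ x : ℝ, a + c ≤ x → x ≤ b + d → ∃ i : Fin (N + 1),
      F (x - max c (min (x - p i) d)) + G (max c (min (x - p i) d)) ≤ H x := by
    intro x hx1 hx2
    obtain ⟨u0, ⟨h1, h2, h3, h4⟩, hHeq, hstruct⟩ := hattain x hx1 hx2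
    rcases hstruct with ⟨j, rfl⟩ | hc | hd
    · refine ⟨j, ?_⟩
      have hmed : max c (min (x - p j) d) = x - p j := by
        rw [min_eq_left h4]
        exact max_eq_right h3
      rw [hmed]
      have he : x - (x - p j) = p j := by ring
      rw [he, ← hHeq]
    · refine ⟨Fin.last N, ?_⟩
      have hu0 : u0 = x - c := by linarith
      have hxb : x - p (Fin.last N) ≤ c := by rw [hpl]; linarith
      have hmed : max c (min (x - p (Fin.last N)) d) = c := by
        apply max_eq_left
        calc min (x - p (Fin.last N)) d ≤ x - p (Fin.last N) := min_le_left _ _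
        _ ≤ c := hxb
      rw [hmed, hHeq, hc, hu0]
    · refine ⟨0, ?_⟩
      have hu0 : u0 = x - d := by linarith
      have hxa : d ≤ x - p 0 := by rw [hp0]; linarith
      have hmed : max c (min (x - p 0) d) = d := by
        rw [min_eq_right hxa]
        exact max_eq_right hcd.le
      rw [hmed, hHeq, hd, hu0]
  have hHcont : ContinuousOn H (Set.Icc (a + c) (b + d)) := by
    have hPsic : ∀ i : Fin (N + 1), ContinuousOn
        (fun x => F (x - max c (min (x - p i) d)) + G (max c (min (x - p i) d)))
        (Set.Icc (a + c) (b + d)) := by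
      intro i
      have hmc : Continuous (fun x : ℝ => max c (min (x - p i) d)) :=
        continuous_const.max ((continuous_id.sub continuous_const).min continuous_const)
      apply ContinuousOn.add
      · refine ContinuousOn.comp hFc ((continuous_id.sub hmc).continuousOn) ?_
        intro x hx
        obtain ⟨_, _, h3, h4⟩ := hmedmem i x hx.1 hx.2
        exact ⟨h3, h4⟩
      · refine ContinuousOn.comp hGc hmc.continuousOn ?_
        intro x hx
        obtain ⟨h1, h2, _, _⟩ := hmedmem i x hx.1 hx.2
        exact ⟨h1, h2⟩
    have hEq : Set.EqOn H (fun x => Finset.univ.inf' Finset.univ_nonempty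
        (fun i : Fin (N + 1) =>
          F (x - max c (min (x - p i) d)) + G (max c (min (x - p i) d))))
        (Set.Icc (a + c) (b + d)) := by
      intro x hx
      apply le_antisymm
      · exact Finset.le_inf' _ _ (fun i _ => hHlePsi i x hx.1 hx.2)
      · obtain ⟨i, hi⟩ := hexPsi x hx.1 hx.2
        exact le_trans (Finset.inf'_le _ (Finset.mem_univ i)) hi
    exact (contOn_finset_inf' Finset.univ (fun i _ => hPsic i) Finset.univ_nonempty).congr hEq
  -- the sets XC and XD
  set XC : Set ℝ := {x | x ∈ Set.Icc (a + c) (b + c) ∧ H x = F (x - c) + G c} with hXCdef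
  set XD : Set ℝ := {x | x ∈ Set.Icc (a + d) (b + d) ∧ H x = F (x - d) + G d} with hXDdef
  have hXCne : (a + c) ∈ XC := by
    refine ⟨⟨le_refl _, by linarith⟩, ?_⟩
    have he : a + c - c = a := by ring
    rw [he]
    apply le_antisymm
    · exact hHle _ a c (le_refl a) hab.le (le_refl c) hcd.le rfl
    · apply hHge _ (le_refl _) (by linarith)
      intro u v h1 h2 h3 h4 h5
      have hu : u = a := by linarith
      have hv : v = c := by linarith
      rw [hu, hv]
  have hXDne : (b + d) ∈ XD := by
    refine ⟨⟨by linarith, le_refl _⟩, ?_⟩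
    have he : b + d - d = b := by ring
    rw [he]
    apply le_antisymm
    · exact hHle _ b d hab.le (le_refl b) hcd.le (le_refl d) rfl
    · apply hHge _ (by linarith) (le_refl _)
      intro u v h1 h2 h3 h4 h5
      have hu : u = b := by linarith
      have hv : v = d := by linarith
      rw [hu, hv]
  have hXCclosed : IsClosed XC := by
    have hsub : Set.Icc (a + c) (b + c) ⊆ Set.Icc (a + c) (b + d) := fun x hx =>
      ⟨hx.1, by linarith [hx.2]⟩
    have h1 : ContinuousOn (fun x => H x - (F (x - c) + G c)) (Set.Icc (a + c) (b + c)) := by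
      apply ContinuousOn.sub (hHcont.mono hsub)
      apply ContinuousOn.add _ continuousOn_const
      refine ContinuousOn.comp hFc ((continuous_id.sub continuous_const).continuousOn) ?_
      intro x hx
      exact ⟨by simpa using by linarith [hx.1], by simpa using by linarith [hx.2]⟩
    have h2 := h1.preimage_isClosed_of_isClosed isClosed_Icc (isClosed_singleton : IsClosed ({0} : Set ℝ))
    have h3 : XC = Set.Icc (a + c) (b + c) ∩
        (fun x => H x - (F (x - c) + G c)) ⁻¹' {0} := by
      ext x
      simp only [hXCdef, Set.mem_setOf_eq, Set.mem_inter_iff, Set.mem_preimage,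
        Set.mem_singleton_iff, sub_eq_zero]
    rw [h3]
    exact h2
  have hXDclosed : IsClosed XD := by
    have hsub : Set.Icc (a + d) (b + d) ⊆ Set.Icc (a + c) (b + d) := fun x hx =>
      ⟨by linarith [hx.1], hx.2⟩
    have h1 : ContinuousOn (fun x => H x - (F (x - d) + G d)) (Set.Icc (a + d) (b + d)) := by
      apply ContinuousOn.sub (hHcont.mono hsub)
      apply ContinuousOn.add _ continuousOn_const
      refine ContinuousOn.comp hFc ((continuous_id.sub continuous_const).continuousOn) ?_
      intro x hx
      exact ⟨by simpa using by linarith [hx.1], by simpa using by linarith [hx.2]⟩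
    have h2 := h1.preimage_isClosed_of_isClosed isClosed_Icc (isClosed_singleton : IsClosed ({0} : Set ℝ))
    have h3 : XD = Set.Icc (a + d) (b + d) ∩
        (fun x => H x - (F (x - d) + G d)) ⁻¹' {0} := by
      ext x
      simp only [hXDdef, Set.mem_setOf_eq, Set.mem_inter_iff, Set.mem_preimage,
        Set.mem_singleton_iff, sub_eq_zero]
    rw [h3]
    exact h2
  have hXCbdd : BddAbove XC := ⟨b + c, fun x hx => hx.1.2⟩
  have hXDbdd : BddBelow XD := ⟨a + d, fun x hx => hx.1.1⟩
  set β := sSup XC with hβdef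
  set γ := sInf XD with hγdef
  have hβmem : β ∈ XC := hXCclosed.csSup_mem ⟨_, hXCne⟩ hXCbdd
  have hγmem : γ ∈ XD := hXDclosed.csInf_mem ⟨_, hXDne⟩ hXDbdd
  have hβ1 : a + c ≤ β := hβmem.1.1
  have hβ2 : β ≤ b + c := hβmem.1.2
  have hγ1 : a + d ≤ γ := hγmem.1.1
  have hγ2 : γ ≤ b + d := hγmem.1.2
  -- H = F(·-c)+G(c) on [a+c, β]
  have hdown : ∀ y : ℝ, a + c ≤ y → y ≤ β → H y = F (y - c) + G c := by
    intro y hy1 hy2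
    have hy2' : y ≤ b + c := le_trans hy2 hβ2
    apply le_antisymm
    · exact hHle y (y - c) c (by linarith) (by linarith) (le_refl c) hcd.le (by ring)
    · apply hHge y hy1 (by linarith)
      intro u v h1 h2 h3 h4 h5
      have hu'1 : a ≤ β - v := by linarith
      have hu'2 : β - v ≤ b := by linarith
      have hle := hHle β (β - v) v hu'1 hu'2 h3 h4 (by ring)
      rw [hβmem.2] at hle
      have hincr := convex_incr hFconv (p := u) (q := y - c) (δ := β - y)
        ⟨h1, h2⟩ ⟨by linarith, by linarith⟩ (by linarith) (by linarith)
      have e1 : u + (β - y) = β - v := by linear_combination h5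
      have e2 : y - c + (β - y) = β - c := by ring
      rw [e1, e2] at hincr
      linarith
  -- H = F(·-d)+G(d) on [γ, b+d]
  have hup : ∀ y : ℝ, γ ≤ y → y ≤ b + d → H y = F (y - d) + G d := by
    intro y hy1 hy2
    have hy1' : a + d ≤ y := le_trans hγ1 hy1
    apply le_antisymm
    · exact hHle y (y - d) d (by linarith) (by linarith) hcd.le (le_refl d) (by ring)
    · apply hHge y (by linarith) hy2
      intro u v h1 h2 h3 h4 h5
      have hu'1 : a ≤ γ - v := by linarith
      have hu'2 : γ - v ≤ b := by linarith
      have hle := hHle γ (γ - v) v hu'1 hu'2 h3 h4 (by ring)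
      rw [hγmem.2] at hle
      have hincr := convex_incr hFconv (p := γ - d) (q := γ - v) (δ := y - γ)
        ⟨by linarith, by linarith⟩ ⟨by linarith, by linarith⟩ (by linarith) (by linarith)
      have e1 : γ - d + (y - γ) = y - d := by ring
      have e2 : γ - v + (y - γ) = u := by linear_combination -h5
      rw [e1, e2] at hincr
      linarith
  refine ⟨β, max β γ, hβ1, le_max_left _ _, max_le (by linarith) hγ2, ?_, ?_, ?_⟩
  · -- convex on [a+c, β]
    have base := convexOn_sub_const hFconv c (G c) (convex_Icc (a + c) β)
      (fun x hx => ⟨by linarith [hx.1], by linarith [hx.2, hβ2]⟩)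
    apply convexOn_congr base
    intro x hx
    exact (hdown x hx.1 hx.2).symm
  · -- concave on [β, max β γ]
    rcases le_or_gt γ β with hgb | hbg
    · rw [max_eq_left hgb, Set.Icc_self]
      refine ⟨convex_singleton β, ?_⟩
      intro x hx y hy lam mu hl hm hlm
      rw [Set.mem_singleton_iff] at hx hy
      subst hx; subst hy
      have hc2 : lam • β + mu • β = β := by
        simp only [smul_eq_mul]; linear_combination β * hlm
      rw [hc2]
      simp only [smul_eq_mul]
      apply le_of_eq
      linear_combination (H β) * hlm
    · rw [max_eq_right hbg.le]
      have key : ∀ x1 x2 lam mu : ℝ, x1 ∈ Set.Icc β γ → x2 ∈ Set.Icc β γ → x1 ≤ x2 →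
          0 ≤ lam → 0 ≤ mu → lam + mu = 1 →
          lam * H x1 + mu * H x2 ≤ H (lam * x1 + mu * x2) := by
        intro x1 x2 lam mu hx1 hx2 h12 hl hm hlm
        rcases eq_or_lt_of_le h12 with rfl | hlt
        · have e1 : lam * x1 + mu * x1 = x1 := by linear_combination x1 * hlm
          rw [e1]
          apply le_of_eq
          linear_combination (H x1) * hlm
        · by_contra hcon
          push_neg at hcon
          set k := (H x2 - H x1) / (x2 - x1) with hkdef
          set A : ℝ → ℝ := fun r => H x1 + (r - x1) * k with hAdef
          have hx21 : x2 - x1 ≠ 0 := (ne_of_gt (sub_pos.2 hlt))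
          have hA1 : A x1 = H x1 := by simp [hAdef]
          have hA2 : A x2 = H x2 := by
            simp only [hAdef, hkdef]
            field_simp
            ring
          have hAt : A (lam * x1 + mu * x2) = lam * H x1 + mu * H x2 := by
            simp only [hAdef, hkdef]
            rw [show lam * x1 + mu * x2 - x1 = mu * (x2 - x1) by linear_combination x1 * hlm]
            field_simp
            linear_combination (-(H x1)) * hlm
          set t := lam * x1 + mu * x2 with htdef
          have het1 : t - x1 = mu * (x2 - x1) := by
            rw [htdef]; linear_combination x1 * hlm
          have het2 : x2 - t = lam * (x2 - x1) := by
            rw [htdef]; linear_combination (-x2) * hlm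
          have htmem : t ∈ Set.Icc x1 x2 := by
            constructor
            · nlinarith [mul_nonneg hm (sub_nonneg.2 hlt.le)]
            · nlinarith [mul_nonneg hl (sub_nonneg.2 hlt.le)]
          have hsubH : Set.Icc x1 x2 ⊆ Set.Icc (a + c) (b + d) := fun r hr =>
            ⟨by linarith [hr.1, hx1.1, hβ1], by linarith [hr.2, hx2.2, hγ2]⟩
          have hδc : ContinuousOn (fun r => H r - A r) (Set.Icc x1 x2) := by
            apply ContinuousOn.sub (hHcont.mono hsubH)
            exact ((continuous_const.add ((continuous_id.sub continuous_const).mul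
              continuous_const)).continuousOn)
          obtain ⟨t0, ht0, hmint0⟩ := isCompact_Icc.exists_isMinOn
            (Set.nonempty_Icc.2 hlt.le) hδc
          have hminle : ∀ r ∈ Set.Icc x1 x2, H t0 - A t0 ≤ H r - A r := fun r hr =>
            (isMinOn_iff.1 hmint0) r hr
          have hm0 : H t0 - A t0 < 0 := by
            have := hminle t htmem
            have hδt : H t - A t < 0 := by rw [hAt]; linarith
            linarith
          have ht01 : x1 < t0 := by
            rcases eq_or_lt_of_le ht0.1 with heq | h
            · exfalso; rw [← heq, hA1] at hm0; linarith
            · exact h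
          have ht02 : t0 < x2 := by
            rcases eq_or_lt_of_le ht0.2 with heq | h
            · exfalso; rw [heq, hA2] at hm0; linarith
            · exact h
          obtain ⟨u0, ⟨hu0a, hu0b, hv0c, hv0d⟩, hHt0, _⟩ :=
            hattain t0 (hsubH ht0).1 (hsubH ht0).2
          set e1 := max x1 (u0 + c) with he1def
          set e2 := min x2 (u0 + d) with he2def
          have he1t0 : e1 ≤ t0 := max_le ht0.1 (by linarith)
          have ht0e2 : t0 ≤ e2 := le_min ht0.2 (by linarith)
          have he1x1 : x1 ≤ e1 := le_max_left _ _
          have he2x2 : e2 ≤ x2 := min_le_left _ _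
          have he1uc : u0 + c ≤ e1 := le_max_right _ _
          have he2ud : e2 ≤ u0 + d := min_le_right _ _
          -- ψ is concave on [e1, e2]
          have hψconc : ConcaveOn ℝ (Set.Icc e1 e2)
              (fun r => G (r - u0) + ((-k) * r + (F u0 - H x1 + x1 * k))) := by
            apply concaveOn_G_sub hGconc u0 (-k) (F u0 - H x1 + x1 * k) (convex_Icc e1 e2)
            intro r hr
            exact ⟨by linarith [hr.1], by linarith [hr.2]⟩
          have hψeq : ∀ r : ℝ, G (r - u0) + ((-k) * r + (F u0 - H x1 + x1 * k))
              = F u0 + G (r - u0) - A r := by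
            intro r
            simp only [hAdef]
            ring
          -- endpoint values are > m
          have hC1 : H t0 - A t0 < F u0 + G (e1 - u0) - A e1 := by
            rcases le_or_gt (u0 + c) x1 with hcase | hcase
            · have he1x : e1 = x1 := max_eq_left hcase
              have hΘ : H x1 ≤ F u0 + G (x1 - u0) :=
                hHle x1 u0 (x1 - u0) hu0a hu0b (by linarith) (by linarith) (by ring)
              rw [he1x, hA1]
              linarith
            · have he1x : e1 = u0 + c := max_eq_right hcase.le
              have hGe : e1 - u0 = c := by rw [he1x]; ring
              have hLH : H e1 ≤ F u0 + G c := by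
                apply hHle e1 u0 c hu0a hu0b (le_refl c) hcd.le
                rw [he1x]
              have hne : H e1 ≠ F u0 + G c := by
                intro heqq
                have hXCe : e1 ∈ XC := by
                  refine ⟨⟨by linarith [he1x], by linarith [he1x]⟩, ?_⟩
                  rw [heqq]
                  congr 1
                  congr 1
                  rw [he1x]; ring
                have : e1 ≤ β := le_csSup hXCbdd hXCe
                have : β ≤ x1 := hx1.1
                linarith [hcase, he1x]
              have hδe1 : H t0 - A t0 ≤ H e1 - A e1 :=
                hminle e1 ⟨he1x1, le_trans he1t0 ht0.2⟩
              rw [hGe]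
              have : H e1 < F u0 + G c := lt_of_le_of_ne hLH hne
              linarith
          have hC2 : H t0 - A t0 < F u0 + G (e2 - u0) - A e2 := by
            rcases le_or_gt x2 (u0 + d) with hcase | hcase
            · have he2x : e2 = x2 := min_eq_left hcase
              have hΘ : H x2 ≤ F u0 + G (x2 - u0) :=
                hHle x2 u0 (x2 - u0) hu0a hu0b (by linarith) (by linarith) (by ring)
              rw [he2x, hA2]
              linarith
            · have he2x : e2 = u0 + d := min_eq_right hcase.le
              have hGe : e2 - u0 = d := by rw [he2x]; ring
              have hRH : H e2 ≤ F u0 + G d := by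
                apply hHle e2 u0 d hu0a hu0b hcd.le (le_refl d)
                rw [he2x]
              have hne : H e2 ≠ F u0 + G d := by
                intro heqq
                have hXDe : e2 ∈ XD := by
                  refine ⟨⟨by linarith [he2x], by linarith [he2x]⟩, ?_⟩
                  rw [heqq]
                  congr 1
                  congr 1
                  rw [he2x]; ring
                have : γ ≤ e2 := csInf_le hXDbdd hXDe
                have : x2 ≤ γ := hx2.2
                linarith [hcase, he2x]
              have hδe2 : H t0 - A t0 ≤ H e2 - A e2 :=
                hminle e2 ⟨le_trans ht0.1 ht0e2, he2x2⟩
              rw [hGe]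
              have : H e2 < F u0 + G d := lt_of_le_of_ne hRH hne
              linarith
          have hmin3 := concave_min hψconc (e1 := e1) (e2 := e2) (t := t0)
            ⟨le_refl e1, le_trans he1t0 ht0e2⟩ ⟨le_trans he1t0 ht0e2, le_refl e2⟩
            ⟨he1t0, ht0e2⟩
          rw [hψeq e1, hψeq e2, hψeq t0] at hmin3
          have hψt0 : F u0 + G (t0 - u0) - A t0 = H t0 - A t0 := by rw [← hHt0]
          rw [hψt0] at hmin3
          have : H t0 - A t0 < min (F u0 + G (e1 - u0) - A e1) (F u0 + G (e2 - u0) - A e2) :=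
            lt_min hC1 hC2
          linarith
      refine ⟨convex_Icc β γ, ?_⟩
      intro x hx y hy lam mu hl hm hlm
      simp only [smul_eq_mul]
      rcases le_total x y with hxy | hyx
      · exact key x y lam mu hx hy hxy hl hm hlm
      · have := key y x mu lam hy hx hyx hm hl (by linarith)
        rw [show mu * y + lam * x = lam * x + mu * y by ring] at this
        linarith
  · -- convex on [max β γ, b+d]
    have base := convexOn_sub_const hFconv d (G d) (convex_Icc (max β γ) (b + d))
      (fun x hx => ⟨by linarith [hx.1, le_max_right β γ, hγ1], by linarith [hx.2]⟩)
    apply convexOn_congr base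
    intro x hx
    exact (hup x (le_trans (le_max_right β γ) hx.1) hx.2).symm


/-- The (min,plus)-convolution of a convex piecewise-affine function by a concave
piecewise-affine function decomposes into three (possibly trivial) consecutive
parts: convex on `[a+c, β]`, concave on `[β, γ]`, convex on `[γ, b+d]`. -/
theorem minplus_convolution_convex_concave (a b c d : ℝ) (hab : a < b) (hcd : c < d)
    (F G : ℝ → ℝ)
    (hFconv : ConvexOn ℝ (Set.Icc a b) F) (hFpwa : IsPiecewiseAffineOn F a b)
    (hGconc : ConcaveOn ℝ (Set.Icc c d) G) (hGpwa : IsPiecewiseAffineOn G c d) :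
    let H : ℝ → ℝ := fun x =>
      sInf {z | ∃ u ∈ Set.Icc a b, ∃ v ∈ Set.Icc c d, u + v = x ∧ z = F u + G v}
    ∃ β γ : ℝ, a + c ≤ β ∧ β ≤ γ ∧ γ ≤ b + d ∧
      ConvexOn ℝ (Set.Icc (a + c) β) H ∧
      ConcaveOn ℝ (Set.Icc β γ) H ∧
      ConvexOn ℝ (Set.Icc γ (b + d)) H := by
  intro H
  exact minplus_aux a b c d hab hcd F G hFconv hFpwa hGconc hGpwa H (fun x => rfl)
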